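/- Let M be a monomial ideal with lcm-lattice L_M, and let m ≠ 1 in L_M. Suppose i₀ ≥ 0 is such that H̃_{i₀}(Δ_{m'}; k) = 0 for every m' ∈ L_M with 1 ≠ m' < m. Then H̃_j(Δ_m; k) = 0 for all j ≥ i₀ + 1. -/

import Mathlib

open scoped Classical

noncomputable section

/-- The faces of cardinality `c` of a simplicial complex `Δ` on vertex set `Fin r`
(encoded as a finite set of finite subsets of `Fin r`). -/
abbrev Face {r : ℕ} (Δ : Finset (Finset (Fin r))) (c : ℕ) : Type :=
  {s : Finset (Fin r) // s ∈ Δ ∧ s.card = c}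

/-- The incidence sign of a codimension-one pair of faces: `(−1)^{position}` if
`t ⊆ s`, and `0` otherwise. -/
def bdryCoef (k : Type*) [Field k] {r : ℕ} (s t : Finset (Fin r)) : k :=
  if t ⊆ s then (-1 : k) ^ ((s \ t).sum fun v => (s.filter fun w => w < v).card) else 0

/-- The boundary map of the (augmented, reduced) simplicial chain complex of `Δ` with
coefficients in `k`, from chains on faces of cardinality `c + 1` (dimension `c`) to
chains on faces of cardinality `c`. -/
def bdry (k : Type*) [Field k] {r : ℕ} (Δ : Finset (Finset (Fin r))) (c : ℕ) :
    (Face Δ (c + 1) → k) →ₗ[k] (Face Δ c → k) :=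
  LinearMap.pi fun t => ∑ s : Face Δ (c + 1), bdryCoef k s.1 t.1 • LinearMap.proj s

/-- Nonvanishing of the reduced homology `H̃_{c−1}(Δ; k)`, i.e. of the homology of the
reduced chain complex at the chains on faces of cardinality `c` (dimension `c − 1`). -/
def HtNonzero (k : Type*) [Field k] {r : ℕ} (Δ : Finset (Finset (Fin r))) : ℕ → Prop
  | 0 => LinearMap.range (bdry k Δ 0) ≠ ⊤
  | c + 1 => LinearMap.ker (bdry k Δ c) ≠ LinearMap.range (bdry k Δ (c + 1))

/-- The atom-support of a multidegree: the indices of generators dividing it. -/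
def aSupp {n r : ℕ} (a : Fin r → (Fin n → ℕ)) (v : Fin n → ℕ) : Finset (Fin r) :=
  Finset.univ.filter fun i => a i ≤ v

/-- The lcm-lattice of the monomial ideal generated by the monomials with exponent
vectors `a i`: all joins (componentwise sups) of subsets of the generators. -/
def latticeL {n r : ℕ} (a : Fin r → (Fin n → ℕ)) : Set (Fin n → ℕ) :=
  {v | ∃ A : Finset (Fin r), v = A.sup a}

/-- `u` is covered by `v` in the lcm-lattice. -/
def covIn {n r : ℕ} (a : Fin r → (Fin n → ℕ)) (u v : Fin n → ℕ) : Prop :=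
  u ∈ latticeL a ∧ u < v ∧ ∀ w ∈ latticeL a, ¬(u < w ∧ w < v)

/-- The simplicial complex `Δ_m` at `m ≠ 1` in the lcm-lattice: the complex whose
facets are the supports `A_{m'}` of the elements `m'` covered by `m` (this is `{∅}`
when `m` is an atom, since then the only covered element is the bottom `1`). -/
def deltaM {n r : ℕ} (a : Fin r → (Fin n → ℕ)) (m : Fin n → ℕ) :
    Finset (Finset (Fin r)) :=
  Finset.univ.filter fun s => ∃ u, covIn a u m ∧ s ⊆ aSupp a u

/-- The rank of `m` in the lcm-lattice: the maximal length of chains from the bottom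
element (exponent vector `0`, the monomial `1`) to `m`. -/
def rkOf {n r : ℕ} (a : Fin r → (Fin n → ℕ)) (m : Fin n → ℕ) : ℕ :=
  sSup {K : ℕ | ∃ c : Fin (K + 1) → (Fin n → ℕ),
    StrictMono c ∧ (∀ j, c j ∈ latticeL a) ∧ c 0 = 0 ∧ c (Fin.last K) = m}

end

noncomputable section SignCalc
open Finset

variable (k : Type*) [Field k] {r : ℕ}

lemma eps_insert {x : Fin r} {t : Finset (Fin r)} (hx : x ∉ t) :
    bdryCoef k (insert x t) t = (-1 : k) ^ (t.filter (fun w => w < x)).card := by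
  have hdiff : insert x t \ t = {x} := by
    ext a
    simp only [mem_sdiff, mem_insert, mem_singleton]
    constructor
    · rintro ⟨h1 | h1, h2⟩
      · exact h1
      · exact absurd h1 h2
    · rintro rfl; exact ⟨Or.inl rfl, hx⟩
  rw [bdryCoef, if_pos (subset_insert x t), hdiff, sum_singleton, filter_insert,
    if_neg (lt_irrefl x)]

lemma eps_sq {s t : Finset (Fin r)} (h : t ⊆ s) :
    bdryCoef k s t * bdryCoef k s t = 1 := by
  rw [bdryCoef, if_pos h, ← pow_add, ← two_mul, pow_mul, neg_one_sq, one_pow]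

lemma eps_key {x y : Fin r} {t : Finset (Fin r)} (hx : x ∉ t) (hy : y ∉ t) (hxy : x ≠ y) :
    bdryCoef k (insert y t) t * bdryCoef k (insert x (insert y t)) (insert y t)
      = -(bdryCoef k (insert x t) t * bdryCoef k (insert x (insert y t)) (insert x t)) := by
  have hy' : y ∉ insert x t := by
    simp only [mem_insert]
    rintro (rfl | h); exact hxy rfl; exact hy h
  have hx' : x ∉ insert y t := by
    simp only [mem_insert]
    rintro (rfl | h); exact hxy rfl; exact hx h
  have hcomm : insert x (insert y t) = insert y (insert x t) := Finset.insert_comm x y t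
  rw [eps_insert k hy, eps_insert k hx, eps_insert k hx', hcomm, eps_insert k hy',
    filter_insert, filter_insert]
  rcases hxy.lt_or_gt with h | h
  · rw [if_neg (asymm h), if_pos h,
      card_insert_of_notMem (fun hc => hx (mem_of_mem_filter x hc))]
    rw [pow_succ]
    ring
  · rw [if_pos h, if_neg (asymm h),
      card_insert_of_notMem (fun hc => hy (mem_of_mem_filter y hc))]
    rw [pow_succ]
    ring

end SignCalc

noncomputable section Dworld
open Finset

variable (k : Type*) [Field k] {r : ℕ}

/-- The global boundary operator on functions on all subsets of `Fin r`. -/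
def Dm (f : Finset (Fin r) → k) : Finset (Fin r) → k :=
  fun t => ∑ x ∈ tᶜ, bdryCoef k (insert x t) t * f (insert x t)

lemma Dm_zero : Dm k (0 : Finset (Fin r) → k) = 0 := by
  funext t; simp [Dm]

lemma Dm_add (f g : Finset (Fin r) → k) : Dm k (f + g) = Dm k f + Dm k g := by
  funext t
  simp only [Dm, Pi.add_apply, mul_add, Finset.sum_add_distrib]

lemma Dm_sub (f g : Finset (Fin r) → k) : Dm k (f - g) = Dm k f - Dm k g := by
  funext t
  simp only [Dm, Pi.sub_apply, mul_sub, Finset.sum_sub_distrib]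

lemma Dm_support {f : Finset (Fin r) → k} {t : Finset (Fin r)} (h : Dm k f t ≠ 0) :
    ∃ x, x ∉ t ∧ f (insert x t) ≠ 0 := by
  by_contra hc
  push_neg at hc
  apply h
  apply Finset.sum_eq_zero
  intro x hx
  rw [hc x (mem_compl.mp hx), mul_zero]

lemma Dm_Dm (f : Finset (Fin r) → k) : Dm k (Dm k f) = 0 := by
  funext t
  show ∑ x ∈ tᶜ, bdryCoef k (insert x t) t * Dm k f (insert x t) = 0
  have hre : ∀ x ∈ tᶜ, bdryCoef k (insert x t) t * Dm k f (insert x t)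
      = ∑ y ∈ tᶜ.erase x, bdryCoef k (insert x t) t *
          (bdryCoef k (insert y (insert x t)) (insert x t) * f (insert y (insert x t))) := by
    intro x _
    rw [Dm, ← compl_insert, Finset.mul_sum]
  rw [Finset.sum_congr rfl hre, Finset.sum_sigma']
  apply Finset.sum_involution (fun p _ => (⟨p.2, p.1⟩ : (_ : Fin r) × Fin r))
  · rintro ⟨x, y⟩ hp
    simp only [Finset.mem_sigma, Finset.mem_erase, Finset.mem_compl] at hp
    obtain ⟨hx, hyx, hy⟩ := hp
    have hkey := eps_key k (x := x) (y := y) (t := t) hx hy (Ne.symm hyx)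
    have hcomm : insert y (insert x t) = insert x (insert y t) := Finset.insert_comm y x t
    show _ + _ = 0
    rw [hcomm]
    linear_combination (f (insert x (insert y t))) * hkey
  · rintro ⟨x, y⟩ hp hne
    simp only [Finset.mem_sigma, Finset.mem_erase, Finset.mem_compl] at hp
    intro hcontra
    exact hp.2.1 (congrArg Sigma.fst hcontra)
  · rintro ⟨x, y⟩ hp
    simp only [Finset.mem_sigma, Finset.mem_erase, Finset.mem_compl] at hp ⊢
    exact ⟨hp.2.2, fun h => hp.2.1 h.symm, hp.1⟩
  · rintro ⟨x, y⟩ _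
    rfl

/-- `f` is supported on faces of `P` of cardinality `c`. -/
def SuppIn (P : Finset (Fin r) → Prop) (c : ℕ) (f : Finset (Fin r) → k) : Prop :=
  ∀ s, f s ≠ 0 → P s ∧ s.card = c

/-- Acyclicity of the complex `P` at (cardinality) level `c + 1`. -/
def AcycM (P : Finset (Fin r) → Prop) (c : ℕ) : Prop :=
  ∀ f, SuppIn k P (c + 1) f → Dm k f = 0 → ∃ g, SuppIn k P (c + 2) g ∧ Dm k g = f

lemma acycM_congr {P Q : Finset (Fin r) → Prop} {c : ℕ} (h : ∀ s, P s ↔ Q s)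
    (hP : AcycM k P c) : AcycM k Q c := by
  intro f hf hDf
  obtain ⟨g, hg1, hg2⟩ := hP f (fun s hs => ⟨(h s).mpr (hf s hs).1, (hf s hs).2⟩) hDf
  exact ⟨g, fun s hs => ⟨(h s).mp (hg1 s hs).1, (hg1 s hs).2⟩, hg2⟩

lemma acycM_of_no_faces {P : Finset (Fin r) → Prop} {c : ℕ}
    (h : ∀ s, P s → s.card ≠ c + 1) : AcycM k P c := by
  intro f hf _
  have hf0 : f = 0 := by
    funext s
    by_contra hs
    exact h s (hf s hs).1 (hf s hs).2
  refine ⟨0, ?_, by rw [Dm_zero, hf0]⟩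
  intro s hs
  exact absurd rfl hs

end Dworld

noncomputable section Cone
open Finset

variable (k : Type*) [Field k] {r : ℕ}

lemma acycM_simplex {P : Finset (Fin r) → Prop} {Bs : Finset (Fin r)}
    (hP : ∀ s, P s ↔ s ⊆ Bs) (c : ℕ) : AcycM k P c := by
  rcases Bs.eq_empty_or_nonempty with rfl | ⟨v₀, hv₀⟩
  · apply acycM_of_no_faces
    intro s hs
    rw [hP, Finset.subset_empty] at hs
    subst hs
    simp
  · intro f hf hDf
    set g : Finset (Fin r) → k := fun S =>
      if v₀ ∈ S ∧ S ⊆ Bs ∧ S.card = c + 2 then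
        bdryCoef k S (S.erase v₀) * f (S.erase v₀) else 0 with hgdef
    have hgval : ∀ S, g S = if v₀ ∈ S ∧ S ⊆ Bs ∧ S.card = c + 2 then
        bdryCoef k S (S.erase v₀) * f (S.erase v₀) else 0 := fun S => rfl
    refine ⟨g, ?_, ?_⟩
    · intro s hs
      rw [hgval s] at hs
      by_cases hcond : v₀ ∈ s ∧ s ⊆ Bs ∧ s.card = c + 2
      · exact ⟨(hP s).mpr hcond.2.1, hcond.2.2⟩
      · rw [if_neg hcond] at hs; exact absurd rfl hs
    · funext t
      show ∑ x ∈ tᶜ, bdryCoef k (insert x t) t * g (insert x t) = f t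
      by_cases hcard : t.card = c + 1
      swap
      · have hft : f t = 0 := by
          by_contra hft
          exact hcard (hf t hft).2
        rw [hft]
        apply Finset.sum_eq_zero
        intro x hx
        have : ¬(v₀ ∈ insert x t ∧ insert x t ⊆ Bs ∧ (insert x t).card = c + 2) := by
          rintro ⟨-, -, hcc⟩
          rw [card_insert_of_notMem (mem_compl.mp hx)] at hcc
          omega
        rw [hgval (insert x t), if_neg this, mul_zero]
      by_cases htB : t ⊆ Bs
      swap
      · have hft : f t = 0 := by
          by_contra hft
          exact htB ((hP t).mp (hf t hft).1)
        rw [hft]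
        apply Finset.sum_eq_zero
        intro x hx
        have : ¬(v₀ ∈ insert x t ∧ insert x t ⊆ Bs ∧ (insert x t).card = c + 2) := by
          rintro ⟨-, hsub, -⟩
          exact htB (fun i hi => hsub (mem_insert_of_mem hi))
        rw [hgval (insert x t), if_neg this, mul_zero]
      by_cases hv : v₀ ∈ t
      · -- main case: pair with the cycle condition at t.erase v₀
        set t' := t.erase v₀ with ht'
        have hins : insert v₀ t' = t := insert_erase hv
        have hDt' : ∑ y ∈ t'ᶜ, bdryCoef k (insert y t') t' * f (insert y t') = 0 :=
          congrFun hDf t'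
        have hcompl : t'ᶜ = insert v₀ tᶜ := by
          rw [ht', compl_erase]
        have hv₀c : v₀ ∉ tᶜ := by
          rw [mem_compl]; exact fun hc => hc hv
        rw [hcompl, Finset.sum_insert hv₀c, hins] at hDt'
        have hsum : ∑ y ∈ tᶜ, bdryCoef k (insert y t') t' * f (insert y t')
            = -(bdryCoef k t t' * f t) := by linear_combination hDt'
        have hsq : bdryCoef k t t' * bdryCoef k t t' = 1 := eps_sq k (erase_subset v₀ t)
        have hterm : ∀ x ∈ tᶜ, bdryCoef k (insert x t) t * g (insert x t)
            = -(bdryCoef k t t' * (bdryCoef k (insert x t') t' * f (insert x t'))) := by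
          intro x hx
          have hxt : x ∉ t := mem_compl.mp hx
          have hxv : x ≠ v₀ := fun hc => hxt (hc ▸ hv)
          by_cases hxB : x ∈ Bs
          · have hcond : v₀ ∈ insert x t ∧ insert x t ⊆ Bs ∧ (insert x t).card = c + 2 := by
              refine ⟨mem_insert_of_mem hv, insert_subset hxB htB, ?_⟩
              rw [card_insert_of_notMem hxt, hcard]
            have herase : (insert x t).erase v₀ = insert x t' := by
              rw [ht', erase_insert_of_ne hxv]
            rw [hgval (insert x t), if_pos hcond, herase]
            -- key sign identity
            have hxt' : x ∉ t' := fun hc => hxt (mem_of_mem_erase hc)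
            have hvt' : v₀ ∉ t' := notMem_erase v₀ t
            have hkey := eps_key k (x := x) (y := v₀) (t := t') hxt' hvt' hxv
            have hSins : insert x (insert v₀ t') = insert x t := by rw [hins]
            rw [hins] at hkey
            -- hkey : ε(t,t') * ε(insert x t, t) = -(ε(insert x t', t') * ε(insert x t, insert x t'))
            have hsqD : bdryCoef k (insert x t) (insert x t') * bdryCoef k (insert x t) (insert x t') = 1 := by
              apply eps_sq
              rw [← hSins]
              exact insert_subset_insert x (subset_insert v₀ t')
            linear_combination (bdryCoef k t t' * bdryCoef k (insert x t) (insert x t') * f (insert x t')) * hkey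
              + (-(bdryCoef k (insert x t) t * bdryCoef k (insert x t) (insert x t') * f (insert x t'))) * hsq
              + (-(bdryCoef k t t' * bdryCoef k (insert x t') t' * f (insert x t'))) * hsqD
          · have hcond : ¬(v₀ ∈ insert x t ∧ insert x t ⊆ Bs ∧ (insert x t).card = c + 2) := by
              rintro ⟨-, hsub, -⟩
              exact hxB (hsub (mem_insert_self x t))
            have hf0 : f (insert x t') = 0 := by
              by_contra hne
              have := (hP _).mp (hf _ hne).1
              exact hxB (this (mem_insert_self x t'))
            rw [hgval (insert x t), if_neg hcond, hf0, mul_zero, mul_zero, mul_zero, neg_zero]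
        have hcollapse : ∑ x ∈ tᶜ, bdryCoef k t t' * (bdryCoef k (insert x t') t' * f (insert x t'))
            = bdryCoef k t t' * ∑ x ∈ tᶜ, bdryCoef k (insert x t') t' * f (insert x t') :=
          (Finset.mul_sum _ _ _).symm
        rw [Finset.sum_congr rfl hterm, Finset.sum_neg_distrib, hcollapse, hsum]
        linear_combination (f t) * hsq
      · -- single term x = v₀
        rw [Finset.sum_eq_single v₀]
        · have hcond : v₀ ∈ insert v₀ t ∧ insert v₀ t ⊆ Bs ∧ (insert v₀ t).card = c + 2 := by
            refine ⟨mem_insert_self v₀ t, insert_subset hv₀ htB, ?_⟩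
            rw [card_insert_of_notMem hv, hcard]
          have herase : (insert v₀ t).erase v₀ = t := erase_insert hv
          rw [hgval (insert v₀ t), if_pos hcond, herase]
          have hsq := eps_sq k (subset_insert v₀ t)
          linear_combination (f t) * hsq
        · intro b _ hb
          have hcond : ¬(v₀ ∈ insert b t ∧ insert b t ⊆ Bs ∧ (insert b t).card = c + 2) := by
            rintro ⟨hmem, -, -⟩
            rcases mem_insert.mp hmem with h | h
            · exact hb h.symm
            · exact hv h
          rw [hgval (insert b t), if_neg hcond, mul_zero]
        · intro hc
          exact absurd (mem_compl.mpr hv) hc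

end Cone

noncomputable section Glue
open Finset

variable (k : Type*) [Field k] {r : ℕ}

/-- A down-closed set of faces. -/
def LowerSet' (P : Finset (Fin r) → Prop) : Prop :=
  ∀ ⦃s t : Finset (Fin r)⦄, P s → t ⊆ s → P t

lemma suppIn_Dm {P : Finset (Fin r) → Prop} (hP : LowerSet' P) {c : ℕ}
    {f : Finset (Fin r) → k} (hf : SuppIn k P (c + 1) f) : SuppIn k P c (Dm k f) := by
  intro t ht
  obtain ⟨x, hx, hfx⟩ := Dm_support k ht
  obtain ⟨hmem, hcard⟩ := hf _ hfx
  rw [card_insert_of_notMem hx] at hcard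
  exact ⟨hP hmem (subset_insert x t), by omega⟩

lemma acycM_glue {A B P : Finset (Fin r) → Prop} {c : ℕ}
    (hPAB : ∀ s, P s ↔ (A s ∨ B s))
    (hAlow : LowerSet' A) (hBlow : LowerSet' B)
    (hA : AcycM k A (c + 1)) (hB : AcycM k B (c + 1))
    (hAB : AcycM k (fun s => A s ∧ B s) c) :
    AcycM k P (c + 1) := by
  intro f hf hDf
  set x : Finset (Fin r) → k := fun s => if A s then f s else 0 with hxdef
  have hxval : ∀ s, x s = if A s then f s else 0 := fun s => rfl
  set y : Finset (Fin r) → k := f - x with hydef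
  have hxy : x + y = f := by rw [hydef]; abel
  have hx_supp : SuppIn k A (c + 2) x := by
    intro s hs
    rw [hxval s] at hs
    by_cases hAs : A s
    · rw [if_pos hAs] at hs; exact ⟨hAs, (hf s hs).2⟩
    · rw [if_neg hAs] at hs; exact absurd rfl hs
  have hy_supp : SuppIn k B (c + 2) y := by
    intro s hs
    have hys : y s = f s - x s := rfl
    rw [hys, hxval s] at hs
    by_cases hAs : A s
    · rw [if_pos hAs, sub_self] at hs; exact absurd rfl hs
    · rw [if_neg hAs, sub_zero] at hs
      rcases (hPAB s).mp (hf s hs).1 with h | h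
      · exact absurd h hAs
      · exact ⟨h, (hf s hs).2⟩
  have hDy : Dm k y = - Dm k x := by
    rw [hydef, Dm_sub, hDf]; abel
  have hw_supp : SuppIn k (fun s => A s ∧ B s) (c + 1) (Dm k x) := by
    intro t ht
    refine ⟨⟨(suppIn_Dm k hAlow hx_supp t ht).1, ?_⟩, (suppIn_Dm k hAlow hx_supp t ht).2⟩
    have : Dm k y t ≠ 0 := by rw [hDy]; simpa using ht
    exact (suppIn_Dm k hBlow hy_supp t this).1
  obtain ⟨v, hv_supp, hv⟩ := hAB (Dm k x) hw_supp (Dm_Dm k x)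
  have hxv_supp : SuppIn k A (c + 2) (x - v) := by
    intro s hs
    have : x s ≠ 0 ∨ v s ≠ 0 := by
      by_contra hc
      push_neg at hc
      apply hs
      show x s - v s = 0
      rw [hc.1, hc.2, sub_zero]
    rcases this with h | h
    · exact hx_supp s h
    · exact ⟨(hv_supp s h).1.1, (hv_supp s h).2⟩
  have hyv_supp : SuppIn k B (c + 2) (y + v) := by
    intro s hs
    have : y s ≠ 0 ∨ v s ≠ 0 := by
      by_contra hc
      push_neg at hc
      apply hs
      show y s + v s = 0
      rw [hc.1, hc.2, add_zero]
    rcases this with h | h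
    · exact hy_supp s h
    · exact ⟨(hv_supp s h).1.2, (hv_supp s h).2⟩
  obtain ⟨gA, hgA_supp, hgA⟩ := hA (x - v) hxv_supp (by rw [Dm_sub, hv, sub_self])
  obtain ⟨gB, hgB_supp, hgB⟩ := hB (y + v) hyv_supp (by rw [Dm_add, hv, hDy]; abel)
  refine ⟨gA + gB, ?_, ?_⟩
  · intro s hs
    have : gA s ≠ 0 ∨ gB s ≠ 0 := by
      by_contra hc
      push_neg at hc
      apply hs
      show gA s + gB s = 0
      rw [hc.1, hc.2, add_zero]
    rcases this with h | h
    · exact ⟨(hPAB s).mpr (Or.inl (hgA_supp s h).1), (hgA_supp s h).2⟩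
    · exact ⟨(hPAB s).mpr (Or.inr (hgB_supp s h).1), (hgB_supp s h).2⟩
  · rw [Dm_add, hgA, hgB, ← hxy]; abel

end Glue

noncomputable section Bridge
open Finset

variable (k : Type*) [Field k] {r : ℕ}

/-- Extension of a chain on faces by zero to all subsets. -/
def ExtC {Δ : Finset (Finset (Fin r))} {c : ℕ} (f : Face Δ c → k) : Finset (Fin r) → k :=
  fun s => if h : s ∈ Δ ∧ s.card = c then f ⟨s, h⟩ else 0

lemma extC_face {Δ : Finset (Finset (Fin r))} {c : ℕ} (f : Face Δ c → k) (S : Face Δ c) :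
    ExtC k f S.1 = f S := by
  rw [ExtC, dif_pos S.2]

lemma extC_injective {Δ : Finset (Finset (Fin r))} {c : ℕ} {f g : Face Δ c → k}
    (h : ExtC k f = ExtC k g) : f = g := by
  funext S
  have := congrFun h S.1
  rwa [extC_face, extC_face] at this

lemma extC_zero {Δ : Finset (Finset (Fin r))} {c : ℕ} :
    ExtC k (0 : Face Δ c → k) = 0 := by
  funext s
  rw [ExtC]
  split <;> rfl

lemma extC_suppIn {Δ : Finset (Finset (Fin r))} {c : ℕ} (f : Face Δ c → k) :
    SuppIn k (· ∈ Δ) c (ExtC k f) := by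
  intro s hs
  rw [ExtC] at hs
  by_cases h : s ∈ Δ ∧ s.card = c
  · exact h
  · rw [dif_neg h] at hs; exact absurd rfl hs

lemma bdry_apply {Δ : Finset (Finset (Fin r))} {c : ℕ} (f : Face Δ (c + 1) → k)
    (t : Face Δ c) :
    bdry k Δ c f t = ∑ S : Face Δ (c + 1), bdryCoef k S.1 t.1 * f S := by
  rw [bdry]
  simp [LinearMap.pi_apply, LinearMap.sum_apply, LinearMap.proj_apply, smul_eq_mul]

def Lower (Δ : Finset (Finset (Fin r))) : Prop :=
  ∀ ⦃s t : Finset (Fin r)⦄, s ∈ Δ → t ⊆ s → t ∈ Δ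

lemma ext_bdry {Δ : Finset (Finset (Fin r))} (hΔ : Lower Δ) {c : ℕ} (f : Face Δ (c + 1) → k) :
    ExtC k (bdry k Δ c f) = Dm k (ExtC k f) := by
  funext s
  by_cases hs : s ∈ Δ ∧ s.card = c
  · have hL : ExtC k (bdry k Δ c f) s = bdry k Δ c f ⟨s, hs⟩ := dif_pos hs
    rw [hL, bdry_apply]
    show _ = ∑ x ∈ sᶜ, bdryCoef k (insert x s) s * ExtC k f (insert x s)
    -- both sides equal the sum over all subsets
    have hLHS : ∑ S : Face Δ (c + 1), bdryCoef k S.1 s * f S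
        = ∑ S ∈ (univ : Finset (Finset (Fin r))), bdryCoef k S s * ExtC k f S := by
      have h1 : ∑ S : Face Δ (c + 1), bdryCoef k S.1 s * f S
          = ∑ S : Face Δ (c + 1), bdryCoef k S.1 s * ExtC k f S.1 := by
        apply Finset.sum_congr rfl
        intro S _
        rw [extC_face]
      rw [h1, ← Finset.sum_subtype (univ.filter (fun S : Finset (Fin r) => S ∈ Δ ∧ S.card = c + 1))
        (fun S => by simp) (fun S => bdryCoef k S s * ExtC k f S)]
      apply Finset.sum_subset (Finset.subset_univ _)
      intro S _ hS
      rw [mem_filter] at hS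
      push_neg at hS
      have : ExtC k f S = 0 := by
        rw [ExtC, dif_neg]
        intro hc
        exact (hS (mem_univ S) hc.1) hc.2
      rw [this, mul_zero]
    have hRHS : ∑ x ∈ sᶜ, bdryCoef k (insert x s) s * ExtC k f (insert x s)
        = ∑ S ∈ (univ : Finset (Finset (Fin r))), bdryCoef k S s * ExtC k f S := by
      rw [← Finset.sum_image (g := fun x => insert x s)
        (f := fun S => bdryCoef k S s * ExtC k f S) ?hinj]
      case hinj =>
        intro x1 h1 x2 h2 heq
        simp only [mem_coe, mem_compl, Set.mem_compl_iff] at h1 h2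
        have heq' : insert x1 s = insert x2 s := heq
        have : x1 ∈ insert x2 s := heq' ▸ mem_insert_self x1 s
        rcases mem_insert.mp this with h | h
        · exact h
        · exact absurd h h1
      apply Finset.sum_subset (Finset.subset_univ _)
      intro S _ hS
      by_contra hne
      have hsub : s ⊆ S := by
        by_contra hsub
        rw [bdryCoef, if_neg hsub, zero_mul] at hne
        exact hne rfl
      have hcards : S.card = c + 1 := by
        by_contra hcS
        have : ExtC k f S = 0 := by
          rw [ExtC, dif_neg]
          intro hc
          exact hcS hc.2
        rw [this, mul_zero] at hne
        exact hne rfl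
      -- S = insert x s for some x ∉ s
      have hd : (S \ s).card = 1 := by
        rw [card_sdiff_of_subset hsub, hcards, hs.2]
        omega
      obtain ⟨x, hxeq⟩ := Finset.card_eq_one.mp hd
      have hxS : x ∈ S \ s := hxeq ▸ mem_singleton_self x
      have hxs : x ∉ s := (mem_sdiff.mp hxS).2
      have hSx : S = insert x s := by
        have h1 : s ∪ S \ s = S := Finset.union_sdiff_of_subset hsub
        rw [hxeq] at h1
        rw [← h1, Finset.union_comm, ← Finset.insert_eq]
      apply hS
      rw [Finset.mem_image]
      exact ⟨x, mem_compl.mpr hxs, hSx.symm⟩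
    rw [hLHS, ← hRHS]
  · have hL : ExtC k (bdry k Δ c f) s = 0 := dif_neg hs
    rw [hL]
    symm
    apply Finset.sum_eq_zero
    intro x hx
    have : ExtC k f (insert x s) = 0 := by
      rw [ExtC, dif_neg]
      rintro ⟨hmem, hcard⟩
      rw [card_insert_of_notMem (mem_compl.mp hx)] at hcard
      exact hs ⟨hΔ hmem (subset_insert x s), by omega⟩
    rw [this, mul_zero]

lemma acycM_to_ker_range {Δ : Finset (Finset (Fin r))} (hΔ : Lower Δ) (c : ℕ)
    (hA : AcycM k (· ∈ Δ) c) :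
    LinearMap.ker (bdry k Δ c) = LinearMap.range (bdry k Δ (c + 1)) := by
  apply le_antisymm
  · intro f hf
    rw [LinearMap.mem_ker] at hf
    have h1 : Dm k (ExtC k f) = 0 := by
      rw [← ext_bdry k hΔ, hf, extC_zero]
    obtain ⟨g, hg1, hg2⟩ := hA (ExtC k f) (extC_suppIn k f) h1
    rw [LinearMap.mem_range]
    refine ⟨fun S => g S.1, ?_⟩
    apply extC_injective k
    rw [ext_bdry k hΔ]
    have hEg : ExtC k (fun S : Face Δ (c + 2) => g S.1) = g := by
      funext s
      by_cases hc : s ∈ Δ ∧ s.card = c + 2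
      · exact dif_pos hc
      · rw [ExtC, dif_neg hc]
        by_contra hne
        exact hc (hg1 s (fun h => hne h.symm))
    rw [hEg, hg2]
  · rintro f ⟨g, rfl⟩
    rw [LinearMap.mem_ker]
    apply extC_injective k
    rw [ext_bdry k hΔ, ext_bdry k hΔ, Dm_Dm, extC_zero]

lemma ker_range_to_acycM {Δ : Finset (Finset (Fin r))} (hΔ : Lower Δ) (c : ℕ)
    (hkr : LinearMap.ker (bdry k Δ c) = LinearMap.range (bdry k Δ (c + 1))) :
    AcycM k (· ∈ Δ) c := by
  intro f hf hDf
  set f' : Face Δ (c + 1) → k := fun S => f S.1 with hf'def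
  have hEf : ExtC k f' = f := by
    funext s
    by_cases hc : s ∈ Δ ∧ s.card = c + 1
    · exact dif_pos hc
    · rw [ExtC, dif_neg hc]
      by_contra hne
      exact hc (hf s (fun h => hne h.symm))
  have hker : f' ∈ LinearMap.ker (bdry k Δ c) := by
    rw [LinearMap.mem_ker]
    apply extC_injective k
    rw [ext_bdry k hΔ, hEf, hDf, extC_zero]
  rw [hkr, LinearMap.mem_range] at hker
  obtain ⟨g, hg⟩ := hker
  refine ⟨ExtC k g, extC_suppIn k g, ?_⟩
  rw [← ext_bdry k hΔ, hg, hEf]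

end Bridge



noncomputable section LatticeLayer
open Finset

variable (k : Type*) [Field k] {n r : ℕ} (a : Fin r → (Fin n → ℕ))

lemma sup_mem_latticeL (s : Finset (Fin r)) : s.sup a ∈ latticeL a := ⟨s, rfl⟩

lemma exists_cover {v m : Fin n → ℕ} (hv : v ∈ latticeL a) (hvm : v < m) :
    ∃ u, covIn a u m ∧ v ≤ u := by
  set T : Finset (Fin n → ℕ) :=
    ((Finset.univ : Finset (Finset (Fin r))).image (fun A => A.sup a)).filter
      (fun w => v ≤ w ∧ w < m) with hT
  have hmemT : ∀ w, w ∈ T ↔ (w ∈ latticeL a ∧ v ≤ w ∧ w < m) := by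
    intro w
    rw [hT, mem_filter, mem_image]
    constructor
    · rintro ⟨⟨A, -, hA⟩, h2⟩; exact ⟨⟨A, hA.symm⟩, h2⟩
    · rintro ⟨⟨A, hA⟩, h2⟩; exact ⟨⟨A, mem_univ A, hA.symm⟩, h2⟩
  have hvT : v ∈ T := (hmemT v).mpr ⟨hv, le_refl v, hvm⟩
  obtain ⟨u, huT, hmax⟩ : ∃ u ∈ T, ∀ x ∈ T, ¬ u < x := by
    obtain ⟨u, hu⟩ := Finset.exists_maximal ⟨v, hvT⟩
    exact ⟨u, hu.1, fun x hx hlt => not_le_of_gt hlt (hu.2 hx hlt.le)⟩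
  obtain ⟨huL, hvu, hum⟩ := (hmemT u).mp huT
  refine ⟨u, ⟨huL, hum, ?_⟩, hvu⟩
  rintro w hwL ⟨huw, hwm⟩
  exact hmax w ((hmemT w).mpr ⟨hwL, le_trans hvu huw.le, hwm⟩) huw

lemma mem_deltaM_iff (m : Fin n → ℕ) (s : Finset (Fin r)) :
    s ∈ deltaM a m ↔ s.sup a < m := by
  rw [deltaM, mem_filter]
  constructor
  · rintro ⟨-, u, hcov, hsub⟩
    refine lt_of_le_of_lt (Finset.sup_le ?_) hcov.2.1
    intro i hi
    have := hsub hi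
    rw [aSupp, mem_filter] at this
    exact this.2
  · intro hlt
    obtain ⟨u, hcov, hvu⟩ := exists_cover a (sup_mem_latticeL a s) hlt
    refine ⟨mem_univ s, u, hcov, ?_⟩
    intro i hi
    rw [aSupp, mem_filter]
    exact ⟨mem_univ i, le_trans (Finset.le_sup hi) hvu⟩

lemma deltaM_lower (m : Fin n → ℕ) : Lower (deltaM a m) := by
  intro s t hs hts
  rw [mem_deltaM_iff] at hs ⊢
  exact lt_of_le_of_lt (Finset.sup_mono hts) hs

lemma sum_lt_of_lt {v w : Fin n → ℕ} (h : v < w) : ∑ i, v i < ∑ i, w i := by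
  have hle := le_of_lt h
  have hne : v ≠ w := ne_of_lt h
  obtain ⟨i, hi⟩ := Function.ne_iff.mp hne
  exact Finset.sum_lt_sum (fun j _ => hle j) ⟨i, mem_univ i, lt_of_le_of_ne (hle i) hi⟩

lemma inner_acyc (i₀ : ℕ) (m : Fin n → ℕ)
    (star : ∀ w, w ∈ latticeL a → w < m → ∀ d, i₀ ≤ d →
      AcycM k (fun s : Finset (Fin r) => s.sup a < w) d) :
    ∀ V : Finset (Fin n → ℕ), (∀ w ∈ V, w ∈ latticeL a ∧ w < m) →
      (∀ v w, v ∈ latticeL a → v < m → w ∈ V → v ≤ w → v ∈ V) →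
      ∀ j, i₀ + 1 ≤ j →
        AcycM k (fun s : Finset (Fin r) => ∃ w ∈ V, s.sup a ≤ w) j := by
  intro V
  induction V using Finset.strongInductionOn with
  | _ V ih =>
  intro hV hVlow j hj
  rcases V.eq_empty_or_nonempty with rfl | hne
  · apply acycM_of_no_faces
    rintro s ⟨w, hw, -⟩
    exact absurd hw (notMem_empty w)
  · obtain ⟨w, hwV, hwmax⟩ : ∃ w ∈ V, ∀ x ∈ V, ¬ w < x := by
      obtain ⟨w, hw⟩ := Finset.exists_maximal hne
      exact ⟨w, hw.1, fun x hx hlt => not_le_of_gt hlt (hw.2 hx hlt.le)⟩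
    obtain ⟨c, rfl⟩ : ∃ c, j = c + 1 := ⟨j - 1, by omega⟩
    apply acycM_glue k (A := fun s : Finset (Fin r) => s.sup a ≤ w)
      (B := fun s : Finset (Fin r) => ∃ w' ∈ V.erase w, s.sup a ≤ w')
    · intro s
      constructor
      · rintro ⟨w', hw', hle⟩
        by_cases hww : w' = w
        · exact Or.inl (hww ▸ hle)
        · exact Or.inr ⟨w', mem_erase.mpr ⟨hww, hw'⟩, hle⟩
      · rintro (hle | ⟨w', hw', hle⟩)
        · exact ⟨w, hwV, hle⟩
        · exact ⟨w', mem_of_mem_erase hw', hle⟩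
    · intro s t hs hts
      exact le_trans (Finset.sup_mono hts) hs
    · rintro s t ⟨w', hw', hle⟩ hts
      exact ⟨w', hw', le_trans (Finset.sup_mono hts) hle⟩
    · -- A is the full simplex on aSupp a w
      apply acycM_simplex k (Bs := aSupp a w)
      intro s
      constructor
      · intro hsw i hi
        rw [aSupp, mem_filter]
        exact ⟨mem_univ i, le_trans (Finset.le_sup hi) hsw⟩
      · intro hsub
        apply Finset.sup_le
        intro i hi
        have := hsub hi
        rw [aSupp, mem_filter] at this
        exact this.2
    · -- B by induction
      refine ih (V.erase w) (Finset.erase_ssubset hwV)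
        (fun w' hw' => hV w' (mem_of_mem_erase hw')) ?_ (c + 1) hj
      intro v w' hvL hvm hw' hvw'
      have hvV : v ∈ V := hVlow v w' hvL hvm (mem_of_mem_erase hw') hvw'
      rw [mem_erase]
      refine ⟨?_, hvV⟩
      rintro rfl
      rcases eq_or_lt_of_le hvw' with heq | hlt
      · exact (mem_erase.mp hw').1 heq.symm
      · exact hwmax w' (mem_of_mem_erase hw') hlt
    · -- intersection is Δ_w
      have hiff : ∀ s : Finset (Fin r),
          (s.sup a < w) ↔ ((s.sup a ≤ w) ∧ ∃ w' ∈ V.erase w, s.sup a ≤ w') := by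
        intro s
        constructor
        · intro hlt
          have hsupm : s.sup a < m := lt_trans hlt (hV w hwV).2
          have hsV : s.sup a ∈ V := hVlow _ w (sup_mem_latticeL a s) hsupm hwV hlt.le
          exact ⟨hlt.le, s.sup a, mem_erase.mpr ⟨ne_of_lt hlt, hsV⟩, le_refl _⟩
        · rintro ⟨h1, w', hw', h2⟩
          rcases eq_or_lt_of_le h1 with heq | hlt
          · exfalso
            rw [heq] at h2
            rcases eq_or_lt_of_le h2 with heq2 | hlt2
            · exact (mem_erase.mp hw').1 heq2.symm
            · exact hwmax w' (mem_of_mem_erase hw') hlt2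
          · exact hlt
      exact acycM_congr k hiff (star w (hV w hwV).1 (hV w hwV).2 c (by omega))

lemma main_acyc (i₀ : ℕ) :
    ∀ N : ℕ, ∀ m : Fin n → ℕ, (∑ i, m i) < N →
      (∀ m', m' ∈ latticeL a → m' ≠ 0 → m' < m →
        AcycM k (fun s : Finset (Fin r) => s.sup a < m') i₀) →
      ∀ j, i₀ + 1 ≤ j → AcycM k (fun s : Finset (Fin r) => s.sup a < m) j := by
  intro N
  induction N with
  | zero => intro m hm; exact absurd hm (Nat.not_lt_zero _)
  | succ N ih =>
    intro m hmN hhyp j hj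
    have star : ∀ w, w ∈ latticeL a → w < m → ∀ d, i₀ ≤ d →
        AcycM k (fun s : Finset (Fin r) => s.sup a < w) d := by
      intro w hwL hwm d hd
      by_cases hw0 : w = (0 : Fin n → ℕ)
      · subst hw0
        apply acycM_of_no_faces
        intro s hs
        exfalso
        have h1 : s.sup a ≤ 0 := le_of_lt hs
        have h2 : (0 : Fin n → ℕ) ≤ s.sup a := fun i => Nat.zero_le _
        exact (ne_of_lt hs) (le_antisymm h1 h2)
      · rcases eq_or_lt_of_le hd with rfl | hd'
        · exact hhyp w hwL hw0 hwm
        · refine ih w ?_ ?_ d hd'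
          · have := sum_lt_of_lt hwm
            omega
          · intro m' h1 h2 h3
            exact hhyp m' h1 h2 (lt_trans h3 hwm)
    set W : Finset (Fin n → ℕ) :=
      ((Finset.univ : Finset (Finset (Fin r))).image (fun A => A.sup a)).filter
        (fun w => w < m) with hW
    have hWmem : ∀ w, w ∈ W ↔ (w ∈ latticeL a ∧ w < m) := by
      intro w
      rw [hW, mem_filter, mem_image]
      constructor
      · rintro ⟨⟨A, -, hA⟩, h2⟩; exact ⟨⟨A, hA.symm⟩, h2⟩
      · rintro ⟨⟨A, hA⟩, h2⟩; exact ⟨⟨A, mem_univ A, hA.symm⟩, h2⟩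
    have hinner := inner_acyc k a i₀ m star W
      (fun w hw => (hWmem w).mp hw)
      (fun v w hvL hvm _ _ => (hWmem v).mpr ⟨hvL, hvm⟩) j hj
    refine acycM_congr k ?_ hinner
    intro s
    constructor
    · rintro ⟨w, hw, hle⟩
      exact lt_of_le_of_lt hle ((hWmem w).mp hw).2
    · intro hlt
      exact ⟨s.sup a, (hWmem _).mpr ⟨sup_mem_latticeL a s, hlt⟩, le_refl _⟩

end LatticeLayer

/-- Let `M` be a monomial ideal (generators encoded by exponent
vectors `a`, minimally generating) with lcm-lattice `L_M`, and let `m ≠ 1` in `L_M`.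
Suppose `i₀ ≥ 0` is such that `H̃_{i₀}(Δ_{m'}; k) = 0` for every `m' ∈ L_M` with
`1 ≠ m' < m`.  Then `H̃_j(Δ_m; k) = 0` for all `j ≥ i₀ + 1`. -/
theorem reduced_homology_vanishes_above (k : Type*) [Field k] {n r : ℕ}
    (a : Fin r → (Fin n → ℕ)) (hmin : ∀ i j, i ≠ j → ¬ a i ≤ a j)
    (m : Fin n → ℕ) (hmL : m ∈ latticeL a) (hm0 : m ≠ 0)
    (i₀ : ℕ)
    (h : ∀ m', m' ∈ latticeL a → m' ≠ 0 → m' < m →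
      LinearMap.ker (bdry k (deltaM a m') i₀)
        = LinearMap.range (bdry k (deltaM a m') (i₀ + 1))) :
    ∀ j : ℕ, i₀ + 1 ≤ j →
      LinearMap.ker (bdry k (deltaM a m) j)
        = LinearMap.range (bdry k (deltaM a m) (j + 1)) := by
  intro j hj
  have hyp : ∀ m', m' ∈ latticeL a → m' ≠ 0 → m' < m →
      AcycM k (fun s : Finset (Fin r) => s.sup a < m') i₀ := by
    intro m' h1 h2 h3
    exact acycM_congr k (fun s => mem_deltaM_iff a m' s)
      (ker_range_to_acycM k (deltaM_lower a m') i₀ (h m' h1 h2 h3))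
  apply acycM_to_ker_range k (deltaM_lower a m) j
  have hmain := main_acyc k a i₀ ((∑ i, m i) + 1) m (Nat.lt_succ_self _) hyp j hj
  exact acycM_congr k (fun s => (mem_deltaM_iff a m s).symm) hmain
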